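/- arXiv:1905.05935 — 2 statements merged into one kernel-verified Lean document; each statement's English description precedes it below -/
import Mathlib

section
/- Let y ∈ ℝ^k, let C be a p×k real matrix with CC' invertible, and let a ∈ ℝ^p be such that the affine subspace {M ∈ ℝ^k : C M = a} is nonempty. Then the minimum of ‖M − y‖² over all M with C M = a equals (a − C y)'(C C')⁻¹(a − C y). -/
open Matrix

lemma norm_sq_eq_dot {k : ℕ} (x : EuclideanSpace ℝ (Fin k)) :
    ‖x‖ ^ 2 = x ⬝ᵥ x := by
  rw [EuclideanSpace.norm_eq, Real.sq_sqrt (Finset.sum_nonneg (fun i _ => sq_nonneg _))]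
  simp [dotProduct, sq]

lemma inner_eq_dot {k : ℕ} (x z : EuclideanSpace ℝ (Fin k)) :
    (inner ℝ x z : ℝ) = x ⬝ᵥ z := by
  simp [PiLp.inner_apply, dotProduct, RCLike.inner_apply, mul_comm]

/-- the minimum of ‖M − y‖² over {M : C M = a} equals
(a − C y)ᵀ (C Cᵀ)⁻¹ (a − C y). -/
theorem stmt_0 {k p : ℕ} (C : Matrix (Fin p) (Fin k) ℝ)
    (hC : IsUnit (C * Cᵀ)) (y : EuclideanSpace ℝ (Fin k)) (a : Fin p → ℝ)
    (hne : ∃ M : EuclideanSpace ℝ (Fin k), C.mulVec M = a) :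
    IsLeast {d : ℝ | ∃ M : EuclideanSpace ℝ (Fin k), C.mulVec M = a ∧ d = ‖M - y‖ ^ 2}
      ((a - C.mulVec y) ⬝ᵥ (C * Cᵀ)⁻¹.mulVec (a - C.mulVec y)) := by
  have hdet : IsUnit (C * Cᵀ).det := (isUnit_iff_isUnit_det _).mp hC
  set w : Fin p → ℝ := (C * Cᵀ)⁻¹.mulVec (a - C.mulVec y) with hw
  have hCw : (C * Cᵀ).mulVec w = a - C.mulVec y := by
    rw [hw, mulVec_mulVec, Matrix.mul_nonsing_inv _ hdet, one_mulVec]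
  set v : EuclideanSpace ℝ (Fin k) := WithLp.toLp 2 (Cᵀ.mulVec w) with hv
  set M₀ : EuclideanSpace ℝ (Fin k) := y + v with hM₀
  have h1 : C.mulVec v = a - C.mulVec y := by
    rw [hv, WithLp.ofLp_toLp, mulVec_mulVec]; exact hCw
  have hM₀a : C.mulVec M₀ = a := by
    have h2 : C.mulVec M₀ = C.mulVec y + C.mulVec v := Matrix.mulVec_add C y v
    rw [h2, h1]; abel
  have hM₀y : M₀ - y = v := by rw [hM₀]; abel
  have hval : ‖M₀ - y‖ ^ 2 = (a - C.mulVec y) ⬝ᵥ w := by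
    rw [norm_sq_eq_dot, hM₀y, hv, WithLp.ofLp_toLp, dotProduct_mulVec, vecMul_transpose, mulVec_mulVec, hCw]
  constructor
  · exact ⟨M₀, hM₀a, hval.symm⟩
  · rintro d ⟨M, hM, rfl⟩
    rw [← hval]
    have h0 : C.mulVec (M - M₀ : EuclideanSpace ℝ (Fin k)) = 0 := by
      have h3 : C.mulVec (M - M₀ : EuclideanSpace ℝ (Fin k)) = C.mulVec M - C.mulVec M₀ := Matrix.mulVec_sub C M M₀
      rw [h3, hM, hM₀a, sub_self]
    have horth : (inner ℝ (M - M₀) (M₀ - y) : ℝ) = 0 := by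
      rw [inner_eq_dot, hM₀y, hv, WithLp.ofLp_toLp, dotProduct_mulVec, vecMul_transpose, h0, zero_dotProduct]
    have hsplit : (M - y : EuclideanSpace ℝ (Fin k)) = (M - M₀) + (M₀ - y) := by abel
    calc ‖M₀ - y‖ ^ 2 ≤ ‖M - M₀‖ ^ 2 + ‖M₀ - y‖ ^ 2 :=
          le_add_of_nonneg_left (by positivity)
    _ = ‖(M - M₀) + (M₀ - y)‖ ^ 2 := by
        rw [norm_add_sq_real, horth]; ring
    _ = ‖M - y‖ ^ 2 := by rw [← hsplit]
end

section
/- For each k ≥ 2, let T_k ~ χ²_{k−1} and let F_k denote the CDF of the χ²_k distribution. Then F_k(T_k) converges in distribution to the Uniform(0,1) distribution as k → ∞. -/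
open MeasureTheory ProbabilityTheory Real Set Filter Topology

namespace ChiSqAux

variable {a b r : ℝ}

lemma integrable_gammaPDFReal (ha : 0 < a) (hr : 0 < r) :
    Integrable (gammaPDFReal a r) := by
  refine ⟨(measurable_gammaPDFReal a r).aestronglyMeasurable, ?_⟩
  rw [hasFiniteIntegral_iff_ofReal (ae_of_all _ (gammaPDFReal_nonneg ha hr))]
  have h := lintegral_gammaPDF_eq_one ha hr
  simp only [gammaPDF] at h
  rw [h]
  exact ENNReal.one_lt_top

lemma integral_gammaPDFReal_eq_one (ha : 0 < a) (hr : 0 < r) :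
    ∫ x, gammaPDFReal a r x = 1 := by
  rw [integral_eq_lintegral_of_nonneg_ae (ae_of_all _ (gammaPDFReal_nonneg ha hr))
    (measurable_gammaPDFReal a r).aestronglyMeasurable]
  have h := lintegral_gammaPDF_eq_one ha hr
  simp only [gammaPDF] at h
  rw [h, ENNReal.toReal_one]

lemma cdf_gamma_eq (ha : 0 < a) (hr : 0 < r) (x : ℝ) :
    cdf (gammaMeasure a r) x = ∫ t in Iic x, gammaPDFReal a r t :=
  cdf_gammaMeasure_eq_integral ha hr x

lemma cdf_gamma_of_nonpos (ha : 0 < a) (hr : 0 < r) {x : ℝ} (hx : x ≤ 0) :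
    cdf (gammaMeasure a r) x = 0 := by
  have : IsProbabilityMeasure (gammaMeasure a r) := isProbabilityMeasure_gammaMeasure ha hr
  rw [cdf_eq_real, measureReal_def, gammaMeasure, withDensity_apply _ measurableSet_Iic,
    lintegral_Iic_eq_lintegral_Iio_add_Icc _ le_rfl, lintegral_gammaPDF_of_nonpos hx,
    Set.Icc_self, setLIntegral_measure_zero _ _ (by simp)]
  simp

lemma continuous_cdf_gamma (ha : 0 < a) (hr : 0 < r) :
    Continuous (cdf (gammaMeasure a r)) := by
  have hint := integrable_gammaPDFReal ha hr
  have heq : (fun x => cdf (gammaMeasure a r) x) =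
      (fun x => (∫ t in Iic (0:ℝ), gammaPDFReal a r t) + ∫ t in (0:ℝ)..x, gammaPDFReal a r t) := by
    funext x
    rw [cdf_gamma_eq ha hr, ← intervalIntegral.integral_Iic_sub_Iic hint.integrableOn hint.integrableOn]
    ring
  have : Continuous fun x => cdf (gammaMeasure a r) x := by
    rw [heq]
    exact continuous_const.add
      (intervalIntegral.continuous_primitive (fun u v => hint.intervalIntegrable) 0)
  exact this


lemma map_cdf_eq_uniform (μ : Measure ℝ) [IsProbabilityMeasure μ]
    (hc : Continuous (cdf μ)) :
    Measure.map (fun x => cdf μ x) μ = volume.restrict (Icc (0:ℝ) 1) := by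
  have hmeas : Measurable fun x => cdf μ x := (monotone_cdf μ).measurable
  have h1 : IsProbabilityMeasure (Measure.map (fun x => cdf μ x) μ) :=
    Measure.isProbabilityMeasure_map hmeas.aemeasurable
  refine MeasureTheory.Measure.ext_of_Iic _ _ (fun y => ?_)
  rw [Measure.map_apply hmeas measurableSet_Iic, Measure.restrict_apply measurableSet_Iic]
  have hR : Iic y ∩ Icc (0:ℝ) 1 = Icc 0 (min 1 y) := by
    ext t
    simp only [mem_inter_iff, mem_Iic, mem_Icc, le_min_iff]
    tauto
  rw [hR, Real.volume_Icc]
  rcases lt_or_ge y 0 with hy | hy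
  · have : (fun x => cdf μ x) ⁻¹' Iic y = ∅ := by
      ext x
      simp only [mem_preimage, mem_Iic, mem_empty_iff_false, iff_false, not_le]
      exact lt_of_lt_of_le hy (cdf_nonneg μ x)
    rw [this, measure_empty, Eq.comm, ENNReal.ofReal_eq_zero]
    have := min_le_right (1:ℝ) y
    linarith
  rcases le_or_gt 1 y with hy1 | hy1
  · have : (fun x => cdf μ x) ⁻¹' Iic y = univ := by
      ext x
      simp only [mem_preimage, mem_Iic, mem_univ, iff_true]
      exact le_trans (cdf_le_one μ x) hy1
    rw [this, measure_univ, min_eq_left hy1]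
    norm_num
  · -- 0 ≤ y < 1
    set S : Set ℝ := (fun x => cdf μ x) ⁻¹' Iic y with hS
    have hSle : ∀ x ∈ S, cdf μ x ≤ y := fun x hx => hx
    have hmin : min 1 y = y := min_eq_right hy1.le
    rw [hmin, sub_zero]
    -- S is bounded above
    obtain ⟨x₀, hx₀⟩ : ∃ x₀, y < cdf μ x₀ := by
      have := (tendsto_cdf_atTop μ).eventually_const_lt hy1
      exact this.exists
    have hbdd : BddAbove S := by
      refine ⟨x₀, fun x hx => ?_⟩
      by_contra hlt
      push_neg at hlt
      exact absurd (le_trans (monotone_cdf μ hlt.le) (hSle x hx)) (not_le.mpr hx₀)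
    have hclosed : IsClosed S := IsClosed.preimage hc isClosed_Iic
    by_cases hne : S.Nonempty
    · set c := sSup S with hc'
      have hcS : c ∈ S := hclosed.csSup_mem hne hbdd
      have hSIic : S = Iic c := by
        ext x
        constructor
        · exact fun hx => le_csSup hbdd hx
        · intro hx
          exact le_trans (monotone_cdf μ hx) (hSle c hcS)
      have hFc : cdf μ c = y := by
        refine le_antisymm (hSle c hcS) ?_
        by_contra hlt
        push_neg at hlt
        have hopen : IsOpen {x : ℝ | cdf μ x < y} := isOpen_lt hc continuous_const
        obtain ⟨ε, hε, hball⟩ := Metric.isOpen_iff.mp hopen c hlt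
        have : c + ε/2 ∈ S := by
          have : c + ε/2 ∈ {x : ℝ | cdf μ x < y} := by
            apply hball
            rw [Metric.mem_ball, Real.dist_eq]
            rw [abs_of_nonneg (by linarith)]
            · linarith
          exact le_of_lt (show cdf μ (c + ε/2) < y from this)
        have := le_csSup hbdd this
        linarith
      rw [hSIic, ← ofReal_cdf μ c, hFc]
    · rw [not_nonempty_iff_eq_empty.mp hne]
      simp only [measure_empty]
      have hy0 : y = 0 := by
        by_contra h
        have hypos : 0 < y := lt_of_le_of_ne hy (Ne.symm h)
        obtain ⟨x, hx⟩ := ((tendsto_cdf_atBot μ).eventually_lt_const hypos).exists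
        exact hne ⟨x, hx.le⟩
      rw [hy0]
      simp


lemma pdf_ratio (ha : 0 < a) (hab : a < b) (hr : 0 < r) {t : ℝ} (ht : 0 < t) :
    gammaPDFReal b r t = (r ^ (b-a) * Gamma a / Gamma b) * t ^ (b-a) * gammaPDFReal a r t := by
  have hb : 0 < b := ha.trans hab
  unfold gammaPDFReal
  rw [if_pos ht.le, if_pos ht.le]
  have h1 : r ^ b = r ^ (b-a) * r ^ a := by
    rw [← Real.rpow_add hr]; congr 1; ring
  have h2 : t ^ (b-1) = t ^ (b-a) * t ^ (a-1) := by
    rw [← Real.rpow_add ht]; congr 1; ring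
  have hga := Real.Gamma_pos_of_pos ha
  have hgb := Real.Gamma_pos_of_pos hb
  rw [h1, h2]
  field_simp

lemma cdf_gamma_anti (ha : 0 < a) (hab : a < b) (hr : 0 < r) (x : ℝ) :
    cdf (gammaMeasure b r) x ≤ cdf (gammaMeasure a r) x := by
  have hb : 0 < b := ha.trans hab
  have hinta := integrable_gammaPDFReal ha hr
  have hintb := integrable_gammaPDFReal hb hr
  set K := r ^ (b-a) * Gamma a / Gamma b with hK
  have hKpos : 0 < K :=
    div_pos (mul_pos (rpow_pos_of_pos hr _) (Real.Gamma_pos_of_pos ha))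
      (Real.Gamma_pos_of_pos hb)
  set t₀ := K⁻¹ ^ ((b-a)⁻¹) with ht₀
  have ht₀pos : 0 < t₀ := rpow_pos_of_pos (inv_pos.mpr hKpos) _
  have hbab : (0:ℝ) < b - a := by linarith
  have hKt₀ : K * t₀ ^ (b-a) = 1 := by
    rw [ht₀, ← Real.rpow_mul (inv_pos.mpr hKpos).le, inv_mul_cancel₀ hbab.ne',
      Real.rpow_one, mul_inv_cancel₀ hKpos.ne']
  have h0 : ∀ᵐ (t : ℝ), t ≠ 0 := by
    rw [ae_iff]
    simpa using measure_singleton (0:ℝ)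
  
  rcases le_or_gt x t₀ with hx | hx
  · rw [cdf_gamma_eq hb hr, cdf_gamma_eq ha hr]
    refine setIntegral_mono_on_ae hintb.integrableOn hinta.integrableOn measurableSet_Iic ?_
    filter_upwards [h0] with t ht0 htx
    rcases lt_or_gt_of_ne ht0 with htneg | htpos
    · simp [gammaPDFReal, not_le.mpr htneg]
    · rw [pdf_ratio ha hab hr htpos]
      have hnn := gammaPDFReal_nonneg ha hr t
      have hle : K * t ^ (b-a) ≤ 1 := by
        calc K * t ^ (b-a) ≤ K * t₀ ^ (b-a) := by
              have := rpow_le_rpow htpos.le (le_trans htx hx) hbab.le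
              nlinarith
          _ = 1 := hKt₀
      nlinarith
  · have hxpos : 0 < x := ht₀pos.trans hx
    have hsplit : ∀ c : ℝ, 0 < c → Integrable (gammaPDFReal c r) →
        cdf (gammaMeasure c r) x = 1 - ∫ t in Ioi x, gammaPDFReal c r t := by
      intro c hc hic
      have := integral_add_compl (measurableSet_Iic (a := x)) hic
      rw [compl_Iic] at this
      rw [cdf_gamma_eq hc hr, integral_gammaPDFReal_eq_one hc hr] at *
      linarith
    rw [hsplit a ha hinta, hsplit b hb hintb]
    have : ∫ t in Ioi x, gammaPDFReal a r t ≤ ∫ t in Ioi x, gammaPDFReal b r t := by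
      refine setIntegral_mono_on_ae hinta.integrableOn hintb.integrableOn measurableSet_Ioi ?_
      filter_upwards with t htx
      have htpos : 0 < t := hxpos.trans htx
      rw [pdf_ratio ha hab hr htpos]
      have hnn := gammaPDFReal_nonneg ha hr t
      have hge : 1 ≤ K * t ^ (b-a) := by
        calc (1:ℝ) = K * t₀ ^ (b-a) := hKt₀.symm
          _ ≤ K * t ^ (b-a) := by
              have := rpow_le_rpow ht₀pos.le (hx.le.trans htx.le) hbab.le
              nlinarith
      nlinarith
    linarith


lemma cdf_gamma_eq_interval (ha : 0 < a) (hr : 0 < r) (x : ℝ) :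
    cdf (gammaMeasure a r) x = ∫ t in (0:ℝ)..x, gammaPDFReal a r t := by
  have hint := integrable_gammaPDFReal ha hr
  have h0 : ∫ t in Iic (0:ℝ), gammaPDFReal a r t = 0 := by
    rw [← cdf_gamma_eq ha hr]; exact cdf_gamma_of_nonpos ha hr le_rfl
  have h := intervalIntegral.integral_Iic_sub_Iic (a := (0:ℝ)) (b := x)
    hint.integrableOn hint.integrableOn
  rw [h0, sub_zero] at h
  rw [cdf_gamma_eq ha hr, h]

lemma cdf_gamma_sub_succ (ha : 0 < a) (hr : 0 < r) {x : ℝ} (hx : 0 ≤ x) :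
    cdf (gammaMeasure a r) x - cdf (gammaMeasure (a+1) r) x
      = (r*x) ^ a * exp (-(r*x)) / Gamma (a+1) := by
  have ha1 : (0:ℝ) < a + 1 := by linarith
  have hinta := integrable_gammaPDFReal ha hr
  have hinta1 := integrable_gammaPDFReal ha1 hr
  set g : ℝ → ℝ := fun t => (r*t) ^ a * exp (-(r*t)) / Gamma (a+1) with hg
  have hderiv : ∀ t ∈ Ioo (0:ℝ) x, HasDerivAt g
      (gammaPDFReal a r t - gammaPDFReal (a+1) r t) t := by
    intro t ht
    obtain ⟨ht0, htx⟩ := ht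
    have hrt : 0 < r * t := mul_pos hr ht0
    have h1 : HasDerivAt (fun s : ℝ => r * s) r t := by
      simpa using (hasDerivAt_id t).const_mul r
    have hu : HasDerivAt (fun s : ℝ => (r*s) ^ a) (a * (r*t) ^ (a-1) * r) t :=
      (Real.hasDerivAt_rpow_const (p := a) (Or.inl hrt.ne')).comp t h1
    have hv : HasDerivAt (fun s : ℝ => exp (-(r*s))) (exp (-(r*t)) * (-r)) t :=
      (Real.hasDerivAt_exp _).comp t h1.neg
    have hprod := (hu.mul hv).div_const (Gamma (a+1))
    refine hprod.congr_deriv (Eq.symm ?_)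
    have e : exp (-(r*t)) = exp (-(r*t)) := rfl
    simp only [gammaPDFReal, if_pos ht0.le]
    rw [Real.Gamma_add_one ha.ne', Real.mul_rpow hr.le ht0.le,
      Real.mul_rpow hr.le ht0.le]
    have e1 : r ^ (a-1) = r ^ a / r := by
      rw [eq_div_iff hr.ne']
      have h := Real.rpow_add hr (a-1) 1
      rw [Real.rpow_one] at h
      rw [← h]
      congr 1
      ring
    have e2 : r ^ (a+1) = r ^ a * r := by
      have h := Real.rpow_add hr a 1
      rw [Real.rpow_one] at h
      exact h
    have e3 : t ^ (a+1-1) = t ^ a := by norm_num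
    have hga := Real.Gamma_pos_of_pos ha
    rw [e1, e2, e3]
    field_simp
    ring
  have hcont : ContinuousOn g (Icc 0 x) := by
    apply Continuous.continuousOn
    apply Continuous.div_const
    exact ((Real.continuous_rpow_const ha.le).comp (continuous_const.mul continuous_id)).mul
      (Real.continuous_exp.comp (continuous_const.mul continuous_id).neg)
  have hint' : IntervalIntegrable (fun t => gammaPDFReal a r t - gammaPDFReal (a+1) r t)
      volume 0 x := hinta.intervalIntegrable.sub hinta1.intervalIntegrable
  have hftc := intervalIntegral.integral_eq_sub_of_hasDeriv_right_of_le hx hcont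
      (fun t ht => (hderiv t ht).hasDerivWithinAt) hint'
  have hg0 : g 0 = 0 := by
    simp [hg, Real.zero_rpow ha.ne']
  rw [cdf_gamma_eq_interval ha hr, cdf_gamma_eq_interval ha1 hr,
    ← intervalIntegral.integral_sub hinta.intervalIntegrable hinta1.intervalIntegrable,
    hftc, hg0, sub_zero]


lemma exp_rpow_form (ha : 0 < a) {y : ℝ} (hy : 0 < y) :
    y ^ a * exp (-y) = exp (a * Real.log y - y) := by
  rw [Real.exp_sub, Real.rpow_def_of_pos hy, Real.exp_neg, mul_comm (Real.log y) a,
    div_eq_mul_inv]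

lemma rpow_mul_exp_le (ha : 0 < a) {y : ℝ} (hy : 0 ≤ y) :
    y ^ a * exp (-y) ≤ a ^ a * exp (-a) := by
  rcases eq_or_lt_of_le hy with h | hypos
  · rw [← h, Real.zero_rpow ha.ne', zero_mul]
    positivity
  · have hlog : Real.log (y/a) ≤ y/a - 1 := Real.log_le_sub_one_of_pos (div_pos hypos ha)
    have key : a * Real.log y - y ≤ a * Real.log a - a := by
      rw [Real.log_div hypos.ne' ha.ne'] at hlog
      have h1 := mul_le_mul_of_nonneg_left hlog ha.le
      have h2 : a * (y/a - 1) = y - a := by field_simp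
      nlinarith
    rw [exp_rpow_form ha hypos, exp_rpow_form ha ha]
    exact Real.exp_le_exp.mpr key

lemma exp_mul_anti (ha : 0 < a) {s t : ℝ} (hs : a ≤ s) (hst : s ≤ t) :
    t ^ a * exp (-t) ≤ s ^ a * exp (-s) := by
  have hs0 : 0 < s := lt_of_lt_of_le ha hs
  have ht0 : 0 < t := lt_of_lt_of_le hs0 hst
  have hlog : Real.log (t/s) ≤ t/s - 1 := Real.log_le_sub_one_of_pos (div_pos ht0 hs0)
  have key : a * Real.log t - t ≤ a * Real.log s - s := by
    rw [Real.log_div ht0.ne' hs0.ne'] at hlog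
    have h1 := mul_le_mul_of_nonneg_left hlog ha.le
    have h2 : a * (t/s - 1) ≤ t - s := by
      rw [div_sub_one hs0.ne', ← mul_div_assoc, div_le_iff₀ hs0]
      nlinarith [mul_le_mul_of_nonneg_right hs (sub_nonneg.mpr hst)]
    nlinarith
  rw [exp_rpow_form ha ht0, exp_rpow_form ha hs0]
  exact Real.exp_le_exp.mpr key

lemma Gamma_succ_lb (ha : 1 ≤ a) :
    Real.sqrt a * (a ^ a * exp (-a)) * exp (-(1:ℝ)) ≤ Gamma (a+1) := by
  have ha0 : (0:ℝ) < a := lt_of_lt_of_le one_pos ha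
  have hsq : 0 < Real.sqrt a := Real.sqrt_pos.mpr ha0
  have hsqsq : Real.sqrt a * Real.sqrt a = a := Real.mul_self_sqrt ha0.le
  have hsq1 : 1 ≤ Real.sqrt a := by
    nlinarith [Real.sqrt_nonneg a]
  set u := Real.sqrt a with hu
  have hint := Real.GammaIntegral_convergent (show (0:ℝ) < a + 1 by linarith)
  rw [Real.Gamma_eq_integral (show (0:ℝ) < a + 1 by linarith)]
  simp only [add_sub_cancel_right] at hint ⊢
  -- step 1 : restrict to Ioc a (a+u)
  have hsub : Ioc a (a+u) ⊆ Ioi (0:ℝ) := fun t ht => lt_trans ha0 ht.1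
  have hmono : ∫ t in Ioc a (a+u), exp (-t) * t ^ a ≤ ∫ t in Ioi 0, exp (-t) * t ^ a := by
    refine setIntegral_mono_set hint ?_ (HasSubset.Subset.eventuallyLE hsub)
    rw [EventuallyLE, ae_restrict_iff' measurableSet_Ioi]
    filter_upwards with t ht
    have : (0:ℝ) < t := ht
    positivity
  -- step 2 : constant lower bound on the slab
  have hconst : exp (-(a+u)) * (a+u) ^ a * u ≤ ∫ t in Ioc a (a+u), exp (-t) * t ^ a := by
    have hvol : (volume (Ioc a (a+u))).toReal = u := by
      rw [Real.volume_Ioc, ENNReal.toReal_ofReal (by linarith)]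
      ring_nf
    have hpt : ∀ t ∈ Ioc a (a+u), exp (-(a+u)) * (a+u) ^ a ≤ exp (-t) * t ^ a := by
      intro t ht
      have h1 := exp_mul_anti ha0 ht.1.le ht.2
      linarith
    have := setIntegral_ge_of_const_le (c := exp (-(a+u)) * (a+u) ^ a)
      measurableSet_Ioc (by simp : volume (Ioc a (a+u)) ≠ ⊤)
      hpt (hint.mono_set hsub)
    rw [measureReal_def, hvol, smul_eq_mul, mul_comm] at this
    exact this
  -- step 3 : the constant is big enough
  have hstep : u * (a ^ a * exp (-a)) * exp (-(1:ℝ)) ≤ exp (-(a+u)) * (a+u) ^ a * u := by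
    have haupos : (0:ℝ) < a + u := by linarith
    have hlog := Real.one_sub_inv_le_log_of_pos (div_pos haupos ha0)
    rw [Real.log_div haupos.ne' ha0.ne', inv_div] at hlog
    have hkey : a * Real.log a - a - 1 ≤ a * Real.log (a+u) - (a+u) := by
      have h1 := mul_le_mul_of_nonneg_left hlog ha0.le
      have h2 : a * (1 - a/(a+u)) = a * u / (a+u) := by field_simp; ring
      have h3 : u - 1 ≤ a * u / (a+u) := by
        rw [le_div_iff₀ haupos]
        nlinarith
      nlinarith
    have e1 : a ^ a * exp (-a) * exp (-(1:ℝ)) = exp (a * Real.log a - a - 1) := by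
      rw [exp_rpow_form ha0 ha0, ← Real.exp_add]
      congr 1
    have e2 : exp (-(a+u)) * (a+u) ^ a = exp (a * Real.log (a+u) - (a+u)) := by
      rw [mul_comm, exp_rpow_form ha0 haupos]
    have := Real.exp_le_exp.mpr hkey
    rw [← e1, ← e2] at this
    nlinarith
  linarith

lemma cdf_gamma_diff_le (ha : 1 ≤ a) (hr : 0 < r) {b : ℝ} (h1 : a < b) (h2 : b < a+1) (x : ℝ) :
    cdf (gammaMeasure a r) x - cdf (gammaMeasure b r) x ≤ exp 1 / Real.sqrt a := by
  have ha0 : (0:ℝ) < a := lt_of_lt_of_le one_pos ha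
  have hb0 : (0:ℝ) < b := by linarith
  have hsq : 0 < Real.sqrt a := Real.sqrt_pos.mpr ha0
  rcases le_or_gt x 0 with hx | hx
  · rw [cdf_gamma_of_nonpos ha0 hr hx, cdf_gamma_of_nonpos hb0 hr hx]
    have hpos : (0:ℝ) ≤ exp 1 / Real.sqrt a := by positivity
    linarith
  · have h3 := cdf_gamma_anti hb0 h2 hr x
    have h4 := cdf_gamma_sub_succ ha0 hr hx.le
    have h5 : (r*x) ^ a * exp (-(r*x)) ≤ a ^ a * exp (-a) :=
      rpow_mul_exp_le ha0 (by positivity)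
    have h6 := Gamma_succ_lb ha
    have hgpos := Real.Gamma_pos_of_pos (show (0:ℝ) < a+1 by linarith)
    have h7 : cdf (gammaMeasure a r) x - cdf (gammaMeasure b r) x
        ≤ a ^ a * exp (-a) / Gamma (a+1) := by
      have := (div_le_div_iff_of_pos_right hgpos).mpr h5
      linarith
    have h8 : a ^ a * exp (-a) / Gamma (a+1) ≤ exp 1 / Real.sqrt a := by
      rw [div_le_div_iff₀ hgpos hsq]
      have he : exp (1:ℝ) * exp (-(1:ℝ)) = 1 := by
        rw [← Real.exp_add]; norm_num
      have h9 : exp 1 * (Real.sqrt a * (a ^ a * exp (-a)) * exp (-(1:ℝ)))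
          = a ^ a * exp (-a) * Real.sqrt a := by
        rw [show exp (1:ℝ) * (Real.sqrt a * (a ^ a * exp (-a)) * exp (-(1:ℝ)))
          = (exp (1:ℝ) * exp (-(1:ℝ))) * (Real.sqrt a * (a ^ a * exp (-a))) from by ring,
          he, one_mul]
        ring
      have h10 := mul_le_mul_of_nonneg_left h6 (Real.exp_pos 1).le
      linarith
    linarith

end ChiSqAux

/-- The chi-squared distribution with k degrees of freedom, as a Gamma(k/2, 1/2) measure. -/
noncomputable def chiSquared (k : ℕ) : Measure ℝ :=
  ProbabilityTheory.gammaMeasure ((k : ℝ) / 2) (1 / 2)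

lemma chiSq_cdf_diff {k : ℕ} (hk : 3 ≤ k) (x : ℝ) :
    0 ≤ cdf (chiSquared (k-1)) x - cdf (chiSquared k) x ∧
      cdf (chiSquared (k-1)) x - cdf (chiSquared k) x
        ≤ Real.exp 1 / Real.sqrt (((k-1 : ℕ):ℝ)/2) := by
  have hk1 : (2:ℝ) ≤ ((k-1:ℕ):ℝ) := by exact_mod_cast (by omega : 2 ≤ k - 1)
  have ha1 : (1:ℝ) ≤ ((k-1:ℕ):ℝ)/2 := by linarith
  have ha0 : (0:ℝ) < ((k-1:ℕ):ℝ)/2 := by linarith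
  have hcast : ((k:ℕ):ℝ)/2 = ((k-1:ℕ):ℝ)/2 + 1/2 := by
    rw [Nat.cast_sub (by omega : 1 ≤ k)]
    push_cast
    ring
  have hchi : chiSquared k = gammaMeasure (((k-1:ℕ):ℝ)/2 + 1/2) (1/2) := by
    rw [chiSquared, hcast]
  have hchi1 : chiSquared (k-1) = gammaMeasure (((k-1:ℕ):ℝ)/2) (1/2) := rfl
  have hlt : ((k-1:ℕ):ℝ)/2 < ((k-1:ℕ):ℝ)/2 + 1/2 := by linarith
  constructor
  · have h := ChiSqAux.cdf_gamma_anti (r := 1/2) ha0 hlt (by norm_num) x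
    rw [← hchi, ← hchi1] at h
    linarith
  · have h := ChiSqAux.cdf_gamma_diff_le (r := 1/2) ha1 (by norm_num) hlt (by linarith) x
    rw [← hchi, ← hchi1] at h
    exact h

/-- if T_k ~ χ²_{k−1} and F_k is the χ²_k CDF, then F_k(T_k) converges in
distribution to Uniform(0,1) as k → ∞ (weak convergence: integrals of bounded continuous
functions converge). -/
theorem stmt_17 :
    ∀ f : BoundedContinuousFunction ℝ ℝ,
      Filter.Tendsto
        (fun k : ℕ =>
          ∫ x, f x ∂(Measure.map (fun x => ProbabilityTheory.cdf (chiSquared k) x)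
            (chiSquared (k - 1))))
        Filter.atTop
        (nhds (∫ x, f x ∂(volume.restrict (Set.Icc (0 : ℝ) 1)))) := by
  intro f
  rw [Metric.tendsto_atTop]
  intro ε hε
  obtain ⟨δ, hδpos, hδ⟩ := Metric.uniformContinuousOn_iff.mp
    (isCompact_Icc.uniformContinuousOn_of_continuous (f.continuous.continuousOn)
      : UniformContinuousOn f (Set.Icc (0:ℝ) 1)) (ε/2) (by linarith)
  have h1 : Filter.Tendsto (fun k : ℕ => (((k-1 : ℕ):ℝ))/2) Filter.atTop Filter.atTop :=
    (tendsto_natCast_atTop_atTop.comp (tendsto_sub_atTop_nat 1)).atTop_div_const two_pos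
  have h2 : Filter.Tendsto (fun k : ℕ => Real.sqrt ((((k-1 : ℕ):ℝ))/2))
      Filter.atTop Filter.atTop := by
    simp only [Real.sqrt_eq_rpow]
    exact (tendsto_rpow_atTop (by norm_num : (0:ℝ) < 1/2)).comp h1
  have h3 : Filter.Tendsto (fun k : ℕ => Real.exp 1 / Real.sqrt ((((k-1 : ℕ):ℝ))/2))
      Filter.atTop (nhds 0) := Filter.Tendsto.div_atTop tendsto_const_nhds h2
  obtain ⟨N, hN⟩ := Filter.eventually_atTop.mp
    ((h3.eventually_lt_const hδpos).and (Filter.eventually_ge_atTop 3))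
  refine ⟨N, fun k hk => ?_⟩
  obtain ⟨hkδ, hk3⟩ := hN k hk
  have hk1 : (2:ℝ) ≤ ((k-1:ℕ):ℝ) := by exact_mod_cast (by omega : 2 ≤ k - 1)
  have ha0 : (0:ℝ) < ((k-1:ℕ):ℝ)/2 := by linarith
  have hkr : (0:ℝ) < ((k:ℕ):ℝ)/2 := by
    have : (3:ℝ) ≤ ((k:ℕ):ℝ) := by exact_mod_cast hk3
    linarith
  have hrate : (0:ℝ) < (1:ℝ)/2 := by norm_num
  have hμ : IsProbabilityMeasure (chiSquared (k-1)) :=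
    isProbabilityMeasure_gammaMeasure ha0 hrate
  have hν : IsProbabilityMeasure (chiSquared k) :=
    isProbabilityMeasure_gammaMeasure hkr hrate
  have hFk_meas : Measurable fun x => cdf (chiSquared k) x := (monotone_cdf _).measurable
  have hFk1_meas : Measurable fun x => cdf (chiSquared (k-1)) x := (monotone_cdf _).measurable
  have hcont : Continuous (cdf (chiSquared (k-1))) := ChiSqAux.continuous_cdf_gamma ha0 hrate
  have hunif : volume.restrict (Set.Icc (0:ℝ) 1)
      = Measure.map (fun x => cdf (chiSquared (k-1)) x) (chiSquared (k-1)) :=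
    (ChiSqAux.map_cdf_eq_uniform _ hcont).symm
  rw [hunif, integral_map hFk_meas.aemeasurable f.continuous.aestronglyMeasurable,
    integral_map hFk1_meas.aemeasurable f.continuous.aestronglyMeasurable]
  have him : IsProbabilityMeasure
      (Measure.map (fun x => cdf (chiSquared k) x) (chiSquared (k-1))) :=
    Measure.isProbabilityMeasure_map hFk_meas.aemeasurable
  have him2 : IsProbabilityMeasure
      (Measure.map (fun x => cdf (chiSquared (k-1)) x) (chiSquared (k-1))) :=
    Measure.isProbabilityMeasure_map hFk1_meas.aemeasurable
  have hint1 : Integrable (fun x => f (cdf (chiSquared k) x)) (chiSquared (k-1)) := by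
    have h := BoundedContinuousFunction.integrable
      (μ := Measure.map (fun x => cdf (chiSquared k) x) (chiSquared (k-1))) f
    exact (integrable_map_measure f.continuous.aestronglyMeasurable
      hFk_meas.aemeasurable).mp h
  have hint2 : Integrable (fun x => f (cdf (chiSquared (k-1)) x)) (chiSquared (k-1)) := by
    have h := BoundedContinuousFunction.integrable
      (μ := Measure.map (fun x => cdf (chiSquared (k-1)) x) (chiSquared (k-1))) f
    exact (integrable_map_measure f.continuous.aestronglyMeasurable
      hFk1_meas.aemeasurable).mp h
  rw [Real.dist_eq, ← integral_sub hint1 hint2, ← Real.norm_eq_abs]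
  have hbound : ∀ x : ℝ, ‖f (cdf (chiSquared k) x) - f (cdf (chiSquared (k-1)) x)‖ ≤ ε/2 := by
    intro x
    have hd := chiSq_cdf_diff hk3 x
    have hu : cdf (chiSquared k) x ∈ Set.Icc (0:ℝ) 1 := ⟨cdf_nonneg _ _, cdf_le_one _ _⟩
    have hv : cdf (chiSquared (k-1)) x ∈ Set.Icc (0:ℝ) 1 := ⟨cdf_nonneg _ _, cdf_le_one _ _⟩
    have hdist : dist (cdf (chiSquared k) x) (cdf (chiSquared (k-1)) x) < δ := by
      rw [Real.dist_eq, abs_sub_comm, abs_of_nonneg hd.1]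
      exact lt_of_le_of_lt hd.2 hkδ
    have hlt := hδ _ hu _ hv hdist
    rw [dist_eq_norm] at hlt
    linarith
  have hle := norm_integral_le_of_norm_le_const (μ := chiSquared (k-1)) (C := ε/2)
    (Filter.Eventually.of_forall hbound)
  rw [probReal_univ, mul_one] at hle
  calc ‖∫ x, (f (cdf (chiSquared k) x) - f (cdf (chiSquared (k-1)) x)) ∂(chiSquared (k-1))‖
      ≤ ε/2 := hle
    _ < ε := by linarith
end
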